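/- Convex approximation of spherical slices (Proposition 5.1): Let n ≥ 2 and let Ω ⊆ ℝⁿ be an open bounded convex set with 0 ∈ closure(Ω), satisfying the cap hypothesis with unit vector e and radius r* ∈ (0, π/2). Then there exists a constant C₁ > 0, depending only on n and r*, such that for every t ∈ (0,1) there exists a nonempty set W_t ⊆ V_t which is geodesically convex — in the sense that {λ·w : λ > 0, w ∈ W_t} ∪ {0} is a convex subset of ℝⁿ — and such that the Hausdorff distance (in the ambient Euclidean metric) between V_t and W_t is at most C₁ · t⁻¹ · M₀(4t). -/

import Mathlib

open Set
open scoped RealInnerProductSpace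

noncomputable section

/-- A unit vector `ν` is an outer supporting normal of `Ω` at `y` if
`⟨ν, z − y⟩ ≤ 0` for all `z ∈ Ω`. -/
def IsOuterNormal {E : Type*} [NormedAddCommGroup E] [InnerProductSpace ℝ E]
    (Ω : Set E) (y ν : E) : Prop :=
  ‖ν‖ = 1 ∧ ∀ z ∈ Ω, ⟪ν, z - y⟫ ≤ 0

/-- `M_x(t) = sup {⟨ν, y − x⟩ : y ∈ ∂Ω, 0 < ‖y − x‖ ≤ t, ν an outer supporting normal at y}`
(`sSup ∅ = 0` in `ℝ`, so the empty case gives `0`). -/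
noncomputable def Mfun {E : Type*} [NormedAddCommGroup E] [InnerProductSpace ℝ E]
    (Ω : Set E) (x : E) (t : ℝ) : ℝ :=
  sSup {m : ℝ | ∃ y ν : E, y ∈ frontier Ω ∧ 0 < ‖y - x‖ ∧ ‖y - x‖ ≤ t ∧
    IsOuterNormal Ω y ν ∧ m = ⟪ν, y - x⟫}

/-- The rescaled spherical slice `V_t = {ω ∈ 𝕊^{n−1} : t·ω ∈ Ω}`. -/
def Vslice {E : Type*} [NormedAddCommGroup E] [InnerProductSpace ℝ E]
    (Ω : Set E) (t : ℝ) : Set E :=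
  {ω | ‖ω‖ = 1 ∧ t • ω ∈ Ω}

/-- Cap hypothesis: the slice `V₁` contains the geodesic cap of radius `rstar` around
the unit vector `e`. -/
def CapHyp {E : Type*} [NormedAddCommGroup E] [InnerProductSpace ℝ E]
    (Ω : Set E) (e : E) (rstar : ℝ) : Prop :=
  ‖e‖ = 1 ∧ ∀ ω : E, ‖ω‖ = 1 → Real.cos rstar < ⟪ω, e⟫ → ω ∈ Vslice Ω 1

section Aux

variable {E : Type*} [NormedAddCommGroup E] [InnerProductSpace ℝ E]

/-- The segment from an interior point to an exterior point crosses the frontier. -/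
lemma crossing_frontier {Ω : Set E} (hop : IsOpen Ω) {z x : E} (hz : z ∈ Ω) (hx : x ∉ Ω) :
    ∃ b : ℝ, 0 < b ∧ b ≤ 1 ∧ z + b • (x - z) ∈ frontier Ω := by
  set γ : ℝ → E := fun s => z + s • (x - z) with hγdef
  have hγc : Continuous γ := by
    apply continuous_const.add
    exact continuous_id.smul continuous_const
  have hγ0 : γ 0 = z := by simp [γ]
  have hγ1 : γ 1 = x := by simp [γ]
  set A : Set ℝ := {s | s ∈ Icc (0:ℝ) 1 ∧ γ s ∈ Ω} with hA
  have h0A : (0:ℝ) ∈ A := ⟨⟨le_refl 0, zero_le_one⟩, by rw [hγ0]; exact hz⟩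
  have hbdd : BddAbove A := ⟨1, fun s hs => hs.1.2⟩
  set b := sSup A with hb
  have hb0 : 0 ≤ b := le_csSup hbdd h0A
  have hb1 : b ≤ 1 := csSup_le ⟨0, h0A⟩ (fun s hs => hs.1.2)
  have hclos : γ b ∈ closure Ω := by
    have hbA : b ∈ closure A := csSup_mem_closure ⟨0, h0A⟩ hbdd
    exact map_mem_closure hγc hbA (fun s hs => hs.2)
  have hbn : γ b ∉ Ω := by
    intro hmem
    have hblt : b < 1 := by
      rcases lt_or_eq_of_le hb1 with h | h
      · exact h
      · exfalso; rw [h, hγ1] at hmem; exact hx hmem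
    have hU : IsOpen (γ ⁻¹' Ω) := hop.preimage hγc
    obtain ⟨ε, hε, hball⟩ := Metric.isOpen_iff.mp hU b hmem
    set s' := min 1 (b + ε/2) with hs'
    have hlt : b < s' := lt_min hblt (by linarith)
    have hs'A : s' ∈ A := by
      refine ⟨⟨le_of_lt (lt_of_le_of_lt hb0 hlt), min_le_left _ _⟩, ?_⟩
      apply hball
      rw [Metric.mem_ball, Real.dist_eq, abs_of_nonneg (by linarith)]
      have : s' ≤ b + ε/2 := min_le_right _ _
      linarith
    have : s' ≤ b := le_csSup hbdd hs'A
    linarith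
  have hbpos : 0 < b := by
    rcases lt_or_eq_of_le hb0 with h | h
    · exact h
    · exfalso; rw [← h, hγ0] at hbn; exact hbn hz
  refine ⟨b, hbpos, hb1, ?_⟩
  rw [hop.frontier_eq]
  exact ⟨hclos, hbn⟩

/-- A point outside an open convex set with nonempty interior admits an outer normal. -/
lemma exists_outer_normal {Ω : Set E} [CompleteSpace E] (hconv : Convex ℝ Ω) (hop : IsOpen Ω)
    {w y : E} (hw : w ∈ Ω) (hy : y ∉ Ω) : ∃ ν, IsOuterNormal Ω y ν := by
  obtain ⟨f, hf⟩ := geometric_hahn_banach_open_point hconv hop hy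
  set v := (InnerProductSpace.toDual ℝ E).symm f with hv
  have hvx : ∀ x : E, ⟪v, x⟫ = f x := fun x => InnerProductSpace.toDual_symm_apply
  have hvne : v ≠ 0 := by
    intro h
    have h2 := hf w hw
    rw [← hvx w, ← hvx y, h] at h2
    simp at h2
  refine ⟨‖v‖⁻¹ • v, ?_, ?_⟩
  · exact norm_smul_inv_norm hvne
  · intro z hz
    have h1 : ⟪v, z - y⟫ ≤ 0 := by
      rw [inner_sub_right, hvx, hvx]
      linarith [hf z hz]
    rw [real_inner_smul_left]
    exact mul_nonpos_of_nonneg_of_nonpos (inv_nonneg.mpr (norm_nonneg v)) h1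

/-- Pair production: if `x ∉ Ω` then there is a frontier point `y` of norm at most
`max δ ‖x‖` with an outer normal `ν` such that `⟪ν, x⟫ > -δ`. -/
lemma exists_pair {Ω : Set E} [CompleteSpace E] (hop : IsOpen Ω) (hconv : Convex ℝ Ω)
    (h0 : (0:E) ∈ closure Ω) {x : E} (hx : x ∉ Ω) {δ : ℝ} (hδ : 0 < δ) :
    ∃ y ν : E, y ∈ frontier Ω ∧ ‖y‖ ≤ max δ ‖x‖ ∧ IsOuterNormal Ω y ν ∧ -δ < ⟪ν, x⟫ := by
  obtain ⟨z₀, hz₀Ω, hz₀d⟩ := Metric.mem_closure_iff.mp h0 δ hδ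
  have hz₀n : ‖z₀‖ < δ := by rwa [dist_comm, dist_zero_right] at hz₀d
  obtain ⟨b, hb0, hb1, hyF⟩ := crossing_frontier hop hz₀Ω hx
  set y := z₀ + b • (x - z₀) with hy
  have hyn : y ∉ Ω := by
    intro hmem
    rw [hop.frontier_eq] at hyF
    exact hyF.2 hmem
  obtain ⟨ν, hν⟩ := exists_outer_normal hconv hop hz₀Ω hyn
  have hνn : ‖ν‖ = 1 := hν.1
  have hkey : ⟪ν, z₀ - y⟫ ≤ 0 := hν.2 z₀ hz₀Ω
  have hzy : z₀ - y = b • (z₀ - x) := by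
    rw [hy]; module
  have h2 : ⟪ν, z₀ - x⟫ ≤ 0 := by
    rw [hzy, real_inner_smul_right] at hkey
    nlinarith
  have h3 : ⟪ν, z₀⟫ ≤ ⟪ν, x⟫ := by
    rw [inner_sub_right] at h2; linarith
  have h4 : -δ < ⟪ν, z₀⟫ := by
    have := abs_real_inner_le_norm ν z₀
    rw [hνn, one_mul] at this
    have := abs_le.mp this
    linarith
  refine ⟨y, ν, hyF, ?_, hν, by linarith⟩
  have hyc : y = (1 - b) • z₀ + b • x := by rw [hy]; module
  calc ‖y‖ ≤ ‖(1 - b) • z₀‖ + ‖b • x‖ := by rw [hyc]; exact norm_add_le _ _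
    _ = (1 - b) * ‖z₀‖ + b * ‖x‖ := by
        rw [norm_smul, norm_smul, Real.norm_eq_abs, Real.norm_eq_abs,
          abs_of_nonneg (by linarith), abs_of_nonneg (by linarith)]
    _ ≤ (1 - b) * max δ ‖x‖ + b * max δ ‖x‖ := by
        gcongr
        · exact le_max_of_le_left hz₀n.le
        · exact le_max_right _ _
    _ = max δ ‖x‖ := by ring

end Aux

set_option maxHeartbeats 1000000 in
/-- Convex approximation of spherical slices (Proposition 5.1). -/
theorem convex_approx_spherical_slices {n : ℕ} (hn : 2 ≤ n)
    (rstar : ℝ) (hr : rstar ∈ Ioo 0 (Real.pi / 2)) :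
    ∃ C₁ : ℝ, 0 < C₁ ∧
      ∀ (Ω : Set (EuclideanSpace ℝ (Fin n))) (e : EuclideanSpace ℝ (Fin n)),
        IsOpen Ω → Bornology.IsBounded Ω → Convex ℝ Ω →
        (0 : EuclideanSpace ℝ (Fin n)) ∈ closure Ω →
        CapHyp Ω e rstar →
        ∀ t ∈ Ioo (0:ℝ) 1,
          ∃ W : Set (EuclideanSpace ℝ (Fin n)),
            W.Nonempty ∧ W ⊆ Vslice Ω t ∧
            Convex ℝ ({x | ∃ l : ℝ, 0 < l ∧ ∃ w ∈ W, x = l • w} ∪ {0}) ∧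
            Metric.hausdorffDist (Vslice Ω t) W ≤ C₁ * t⁻¹ * Mfun Ω 0 (4 * t) := by
  classical
  obtain ⟨hr0, hrπ⟩ := hr
  set c₀ := Real.cos rstar with hc₀
  have hc₀pos : 0 < c₀ := Real.cos_pos_of_mem_Ioo ⟨by linarith [Real.pi_pos], hrπ⟩
  have hc₀lt1 : c₀ < 1 := by
    have := Real.cos_lt_cos_of_nonneg_of_le_pi (le_refl 0)
      (by linarith [Real.pi_pos]) hr0
    simpa using this
  set ρ := (1 - c₀) / 8 with hρ
  have hρpos : 0 < ρ := by rw [hρ]; linarith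
  have hρlt : ρ < 1 / 8 := by rw [hρ]; linarith
  refine ⟨200 / ρ, by positivity, ?_⟩
  intro Ω e hop hbd hconv h0 hCap t ht
  obtain ⟨ht0, ht1⟩ := ht
  obtain ⟨he1, hcap⟩ := hCap
  have hee : ⟪e, e⟫ = 1 := by
    rw [real_inner_self_eq_norm_sq, he1]; norm_num
  have hΩe : e ∈ Ω := by
    have := (hcap e he1 (by rw [hee]; exact hc₀lt1)).2
    simpa using this
  -- scaling property
  have hscale : ∀ z ∈ Ω, ∀ s : ℝ, 0 < s → s < 1 → s • z ∈ Ω := by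
    intro z hz s hs0 hs1
    have hzi : z ∈ interior Ω := by rwa [hop.interior_eq]
    have hmem : s • z ∈ openSegment ℝ (0:(EuclideanSpace ℝ (Fin n))) z := by
      refine ⟨1 - s, s, by linarith, hs0, by ring, by simp⟩
    have := hconv.openSegment_closure_interior_subset_interior h0 hzi hmem
    rwa [hop.interior_eq] at this
  -- ball around e/2 inside Ω
  have hball : ∀ z : (EuclideanSpace ℝ (Fin n)), ‖z - (2:ℝ)⁻¹ • e‖ < ρ → z ∈ Ω := by
    intro z hzd
    have hhe : ‖(2:ℝ)⁻¹ • e‖ = 2⁻¹ := by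
      rw [norm_smul, Real.norm_eq_abs, he1]; norm_num
    have hz_up : ‖z‖ < 2⁻¹ + ρ := by
      have hzsplit : z = (2:ℝ)⁻¹ • e + (z - (2:ℝ)⁻¹ • e) := by abel
      calc ‖z‖ = ‖(2:ℝ)⁻¹ • e + (z - (2:ℝ)⁻¹ • e)‖ := by rw [← hzsplit]
        _ ≤ ‖(2:ℝ)⁻¹ • e‖ + ‖z - (2:ℝ)⁻¹ • e‖ := norm_add_le _ _
        _ < 2⁻¹ + ρ := by rw [hhe]; linarith
    have hz_low : 2⁻¹ - ρ < ‖z‖ := by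
      have h := norm_sub_norm_le ((2:ℝ)⁻¹ • e) z
      rw [hhe, norm_sub_rev] at h
      linarith
    have hzpos : 0 < ‖z‖ := by linarith
    have hzne : z ≠ 0 := by intro h; rw [h, norm_zero] at hzpos; linarith
    set ω : (EuclideanSpace ℝ (Fin n)) := ‖z‖⁻¹ • z with hω
    have hω1 : ‖ω‖ = 1 := norm_smul_inv_norm hzne
    have hze : 2⁻¹ - ρ < ⟪z, e⟫ := by
      have hdecomp : ⟪z, e⟫ = ⟪(2:ℝ)⁻¹ • e, e⟫ + ⟪z - (2:ℝ)⁻¹ • e, e⟫ := by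
        rw [← inner_add_left]; congr 1; abel
      have h1 : ⟪(2:ℝ)⁻¹ • e, e⟫ = 2⁻¹ := by rw [real_inner_smul_left, hee]; ring
      have h2 : |⟪z - (2:ℝ)⁻¹ • e, e⟫| ≤ ‖z - (2:ℝ)⁻¹ • e‖ := by
        have := abs_real_inner_le_norm (z - (2:ℝ)⁻¹ • e) e
        rwa [he1, mul_one] at this
      have h3 := (abs_le.mp h2).1
      rw [hdecomp, h1]
      linarith
    have hωe : c₀ < ⟪ω, e⟫ := by
      have hiff : (c₀ < ‖z‖⁻¹ * ⟪z, e⟫) ↔ c₀ * ‖z‖ < ⟪z, e⟫ := by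
        rw [← div_eq_inv_mul, lt_div_iff₀ hzpos]
      rw [hω, real_inner_smul_left, hiff]
      nlinarith [mul_lt_mul_of_pos_left hz_up hc₀pos,
        mul_pos (sub_pos.mpr hc₀lt1) (show (0:ℝ) < 3 - c₀ by linarith)]
    have hωΩ : ω ∈ Ω := by
      have := (hcap ω hω1 hωe).2
      simpa using this
    have hz1 : ‖z‖ < 1 := by
      have : ρ < (2:ℝ)⁻¹ := by norm_num at hρlt ⊢; linarith
      linarith
    have := hscale ω hωΩ ‖z‖ hzpos hz1
    rwa [hω, smul_inv_smul₀ (ne_of_gt hzpos)] at this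
  -- the sup set and M
  set S : Set ℝ := {m : ℝ | ∃ y ν : (EuclideanSpace ℝ (Fin n)), y ∈ frontier Ω ∧ 0 < ‖y - 0‖ ∧ ‖y - 0‖ ≤ 4 * t ∧
    IsOuterNormal Ω y ν ∧ m = ⟪ν, y - 0⟫} with hS
  have hMdef : Mfun Ω 0 (4 * t) = sSup S := rfl
  set M := sSup S with hM
  rw [hMdef]
  have hbddS : BddAbove S := by
    refine ⟨4 * t, ?_⟩
    rintro m ⟨y, ν, hyF, hy0, hy4t, ⟨hν1, _⟩, rfl⟩
    calc ⟪ν, y - 0⟫ ≤ ‖ν‖ * ‖y - 0‖ := real_inner_le_norm _ _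
      _ = ‖y - 0‖ := by rw [hν1, one_mul]
      _ ≤ 4 * t := hy4t
  have hinner_nonneg : ∀ y ν : (EuclideanSpace ℝ (Fin n)), IsOuterNormal Ω y ν → 0 ≤ ⟪ν, y⟫ := by
    intro y ν hν
    have hcl : closure Ω ⊆ {z : (EuclideanSpace ℝ (Fin n)) | ⟪ν, z - y⟫ ≤ 0} := by
      apply closure_minimal (fun z hz => hν.2 z hz)
      have hc1 : Continuous fun z : (EuclideanSpace ℝ (Fin n)) => z - y := continuous_sub_right y
      exact isClosed_le (Continuous.inner (𝕜 := ℝ) continuous_const hc1) continuous_const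
    have := hcl h0
    simp only [mem_setOf_eq, zero_sub, inner_neg_right] at this
    linarith
  have hM0 : 0 ≤ M := by
    rcases Set.eq_empty_or_nonempty S with h | ⟨m, hm⟩
    · rw [hM, h, Real.sSup_empty]
    · obtain ⟨y, ν, hyF, hy0, hy4t, hν, rfl⟩ := hm
      have h1 : (0:ℝ) ≤ ⟪ν, y - 0⟫ := by
        rw [sub_zero]; exact hinner_nonneg y ν hν
      have h2 := le_csSup hbddS (by exact ⟨y, ν, hyF, hy0, hy4t, hν, rfl⟩ :
        ⟪ν, y - 0⟫ ∈ S)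
      linarith
  have hMle : ∀ y ν : (EuclideanSpace ℝ (Fin n)), y ∈ frontier Ω → ‖y‖ ≤ 4 * t → IsOuterNormal Ω y ν →
      ⟪ν, y⟫ ≤ M := by
    intro y ν hyF hy4t hν
    by_cases hy : y = 0
    · rw [hy]; simpa using hM0
    · have hy0 : 0 < ‖y - 0‖ := by rw [sub_zero]; exact norm_pos_iff.mpr hy
      have hmem : ⟪ν, y - 0⟫ ∈ S := ⟨y, ν, hyF, hy0, by rwa [sub_zero], hν, rfl⟩
      have := le_csSup hbddS hmem
      rwa [sub_zero] at this
  -- the compact set of pairs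
  set P : Set ((EuclideanSpace ℝ (Fin n)) × (EuclideanSpace ℝ (Fin n))) := {p | p.1 ∈ frontier Ω ∧ ‖p.1‖ ≤ 4 * t ∧ IsOuterNormal Ω p.1 p.2}
    with hP
  have hPcomp : IsCompact P := by
    apply Metric.isCompact_of_isClosed_isBounded
    · have h1 : IsClosed {p : (EuclideanSpace ℝ (Fin n)) × (EuclideanSpace ℝ (Fin n)) | p.1 ∈ frontier Ω} :=
        isClosed_frontier.preimage continuous_fst
      have h2 : IsClosed {p : (EuclideanSpace ℝ (Fin n)) × (EuclideanSpace ℝ (Fin n)) | ‖p.1‖ ≤ 4 * t} :=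
        isClosed_le continuous_fst.norm continuous_const
      have h3 : IsClosed {p : (EuclideanSpace ℝ (Fin n)) × (EuclideanSpace ℝ (Fin n)) | ‖p.2‖ = 1} :=
        isClosed_eq continuous_snd.norm continuous_const
      have h4 : IsClosed {p : (EuclideanSpace ℝ (Fin n)) × (EuclideanSpace ℝ (Fin n)) | ∀ z ∈ Ω, ⟪p.2, z - p.1⟫ ≤ 0} := by
        have : {p : (EuclideanSpace ℝ (Fin n)) × (EuclideanSpace ℝ (Fin n)) | ∀ z ∈ Ω, ⟪p.2, z - p.1⟫ ≤ 0} =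
            ⋂ z ∈ Ω, {p : (EuclideanSpace ℝ (Fin n)) × (EuclideanSpace ℝ (Fin n)) | ⟪p.2, z - p.1⟫ ≤ 0} := by
          ext p; simp
        rw [this]
        refine isClosed_biInter (fun z hz => ?_)
        exact isClosed_le (Continuous.inner continuous_snd
          (continuous_const.sub continuous_fst)) continuous_const
      have : P = {p : (EuclideanSpace ℝ (Fin n)) × (EuclideanSpace ℝ (Fin n)) | p.1 ∈ frontier Ω} ∩ {p : (EuclideanSpace ℝ (Fin n)) × (EuclideanSpace ℝ (Fin n)) | ‖p.1‖ ≤ 4 * t} ∩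
          ({p : (EuclideanSpace ℝ (Fin n)) × (EuclideanSpace ℝ (Fin n)) | ‖p.2‖ = 1} ∩ {p : (EuclideanSpace ℝ (Fin n)) × (EuclideanSpace ℝ (Fin n)) | ∀ z ∈ Ω, ⟪p.2, z - p.1⟫ ≤ 0}) := by
        ext p
        simp only [hP, IsOuterNormal, mem_inter_iff, mem_setOf_eq]
        tauto
      rw [this]
      exact ((h1.inter h2).inter (h3.inter h4))
    · apply Bornology.IsBounded.subset
        ((Metric.isBounded_closedBall (x := (0:(EuclideanSpace ℝ (Fin n)))) (r := 4*t)).prod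
          (Metric.isBounded_closedBall (x := (0:(EuclideanSpace ℝ (Fin n)))) (r := 1)))
      rintro ⟨y, ν⟩ ⟨_, hy4t, hν1, _⟩
      constructor
      · simpa [Metric.mem_closedBall, dist_zero_right] using hy4t
      · simp [Metric.mem_closedBall, dist_zero_right, hν1]
  have hPyM : ∀ p ∈ P, ⟪p.2, p.1⟫ ≤ M := fun p hp => hMle p.1 p.2 hp.1 hp.2.1 hp.2.2
  have hPe : ∀ p ∈ P, ⟪p.2, e⟫ ≤ 2 * M - ρ := by
    rintro ⟨y, ν⟩ ⟨hyF, hy4t, hν1, hνs⟩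
    have hz : (2:ℝ)⁻¹ • e + (ρ/2) • ν ∈ Ω := by
      apply hball
      rw [add_sub_cancel_left, norm_smul, Real.norm_eq_abs, hν1,
        abs_of_nonneg (by linarith), mul_one]
      linarith
    have h1 := hνs _ hz
    have hνν : ⟪ν, ν⟫ = 1 := by
      rw [real_inner_self_eq_norm_sq, hν1]; norm_num
    rw [show (2:ℝ)⁻¹ • e + (ρ/2) • ν - y = ((2:ℝ)⁻¹ • e + (ρ/2) • ν) - y from rfl,
      inner_sub_right, inner_add_right, real_inner_smul_right, real_inner_smul_right,
      hνν] at h1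
    have h2 : ⟪ν, y⟫ ≤ M := hPyM (y, ν) ⟨hyF, hy4t, hν1, hνs⟩
    nlinarith
  -- two regimes
  by_cases hMbig : ρ * t / 100 ≤ M
  · -- big regime : W = {e}
    refine ⟨{e}, ⟨e, rfl⟩, ?_, ?_, ?_⟩
    · intro w hw
      rw [mem_singleton_iff] at hw
      rw [hw]
      exact ⟨he1, hscale e hΩe t ht0 ht1⟩
    · have hEq : ({x : (EuclideanSpace ℝ (Fin n)) | ∃ l : ℝ, 0 < l ∧ ∃ w ∈ ({e}:Set (EuclideanSpace ℝ (Fin n))), x = l • w} ∪ {0}) =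
          (LinearMap.toSpanSingleton ℝ (EuclideanSpace ℝ (Fin n)) e) '' (Ici (0:ℝ)) := by
        ext x
        simp only [mem_union, mem_setOf_eq, mem_singleton_iff, mem_image,
          LinearMap.toSpanSingleton_apply, mem_Ici]
        constructor
        · rintro (⟨l, hl, w, rfl, rfl⟩ | rfl)
          · exact ⟨l, hl.le, rfl⟩
          · exact ⟨0, le_refl 0, (zero_smul ℝ e).symm ▸ rfl⟩
        · rintro ⟨l, hl, rfl⟩
          rcases eq_or_lt_of_le hl with h | h
          · right; rw [← h, zero_smul]
          · left; exact ⟨l, h, e, rfl, rfl⟩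
      rw [hEq]
      exact (convex_Ici (0:ℝ)).linear_image _
    · apply Metric.hausdorffDist_le_of_infDist
      · positivity
      · intro ω hω
        have h2r : 2 ≤ 200 / ρ * t⁻¹ * M := by
          have h1 : 200 / ρ * t⁻¹ * (ρ * t / 100) ≤ 200 / ρ * t⁻¹ * M := by
            apply mul_le_mul_of_nonneg_left hMbig
            positivity
          have h2 : 200 / ρ * t⁻¹ * (ρ * t / 100) = 2 := by
            field_simp
            ring
          linarith
        calc Metric.infDist ω ({e}:Set (EuclideanSpace ℝ (Fin n))) = dist ω e := Metric.infDist_singleton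
          _ ≤ ‖ω‖ + ‖e‖ := by rw [dist_eq_norm]; exact norm_sub_le _ _
          _ = 2 := by rw [hω.1, he1]; norm_num
          _ ≤ 200 / ρ * t⁻¹ * M := h2r
      · intro w hw
        rw [mem_singleton_iff] at hw
        rw [hw, Metric.infDist_zero_of_mem
          (show e ∈ Vslice Ω t from ⟨he1, hscale e hΩe t ht0 ht1⟩)]
        positivity
  · -- small regime
    push_neg at hMbig
    set W : Set (EuclideanSpace ℝ (Fin n)) := {ω | ‖ω‖ = 1 ∧ ∀ p ∈ P, ⟪p.2, ω⟫ < -(3 * M / t)} with hW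
    have h2Mρ : ∀ p ∈ P, ⟪p.2, e⟫ < -(3 * M / t) := by
      intro p hp
      have h1 := hPe p hp
      rw [← neg_div, lt_div_iff₀ ht0]
      have h2 : ⟪p.2, e⟫ * t ≤ (2 * M - ρ) * t := by
        apply mul_le_mul_of_nonneg_right h1 ht0.le
      nlinarith
    have heW : e ∈ W := ⟨he1, h2Mρ⟩
    have hWV : W ⊆ Vslice Ω t := by
      rintro ω ⟨hω1, hωP⟩
      refine ⟨hω1, ?_⟩
      by_contra hxout
      have hfact : ∀ δ : ℝ, 0 < δ → ∃ p ∈ P, -δ < ⟪p.2, t • ω⟫ := by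
        intro δ hδ
        have hmin : 0 < min δ t := lt_min hδ ht0
        obtain ⟨y, ν, hyF, hyn, hν, hi⟩ := exists_pair hop hconv h0 hxout hmin
        have htω : ‖t • ω‖ = t := by
          rw [norm_smul, Real.norm_eq_abs, abs_of_pos ht0, hω1, mul_one]
        have hyn4 : ‖y‖ ≤ 4 * t := by
          rw [htω] at hyn
          have : max (min δ t) t = t := max_eq_right (min_le_right _ _)
          rw [this] at hyn
          linarith
        refine ⟨(y, ν), ⟨hyF, hyn4, hν⟩, ?_⟩
        have : min δ t ≤ δ := min_le_left _ _
        linarith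
      obtain ⟨p₀, hp₀, _⟩ := hfact 1 one_pos
      obtain ⟨pm, hpm, hmax⟩ := hPcomp.exists_isMaxOn ⟨p₀, hp₀⟩
        ((Continuous.inner (𝕜 := ℝ) continuous_snd continuous_const).continuousOn)
      have hneg : ⟪pm.2, t • ω⟫ < 0 := by
        rw [real_inner_smul_right]
        apply mul_neg_of_pos_of_neg ht0
        have h1 := hωP pm hpm
        have h2 : 0 ≤ 3 * M / t := by positivity
        linarith
      obtain ⟨p, hp, hlt⟩ := hfact (-⟪pm.2, t • ω⟫) (by linarith)
      have := hmax hp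
      simp only [neg_neg] at hlt
      exact absurd (lt_of_lt_of_le hlt this) (lt_irrefl _)
    -- convexity of the cone
    have hUchar : ({x : (EuclideanSpace ℝ (Fin n)) | ∃ l : ℝ, 0 < l ∧ ∃ w ∈ W, x = l • w} ∪ {0}) =
        {x : (EuclideanSpace ℝ (Fin n)) | x = 0 ∨ (x ≠ 0 ∧ ∀ p ∈ P, ⟪p.2, x⟫ < -(3 * M / t) * ‖x‖)} := by
      ext x
      simp only [mem_union, mem_setOf_eq, mem_singleton_iff]
      constructor
      · rintro (⟨l, hl, w, ⟨hw1, hwP⟩, rfl⟩ | rfl)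
        · right
          have hwne : w ≠ 0 := by
            intro h; rw [h, norm_zero] at hw1; norm_num at hw1
          refine ⟨smul_ne_zero (ne_of_gt hl) hwne, fun p hp => ?_⟩
          rw [real_inner_smul_right, norm_smul, Real.norm_eq_abs, abs_of_pos hl, hw1,
            mul_one]
          calc l * ⟪p.2, w⟫ < l * (-(3 * M / t)) :=
                mul_lt_mul_of_pos_left (hwP p hp) hl
            _ = -(3 * M / t) * l := by ring
        · left; rfl
      · rintro (rfl | ⟨hx0, hxP⟩)
        · right; rfl
        · left
          have hxpos : 0 < ‖x‖ := norm_pos_iff.mpr hx0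
          refine ⟨‖x‖, hxpos, ‖x‖⁻¹ • x, ⟨norm_smul_inv_norm hx0, fun p hp => ?_⟩,
            (smul_inv_smul₀ (ne_of_gt hxpos) x).symm⟩
          rw [real_inner_smul_right]
          have h1 := hxP p hp
          have h2 : ‖x‖⁻¹ * ⟪p.2, x⟫ < ‖x‖⁻¹ * (-(3 * M / t) * ‖x‖) :=
            mul_lt_mul_of_pos_left h1 (inv_pos.mpr hxpos)
          calc ‖x‖⁻¹ * ⟪p.2, x⟫ < ‖x‖⁻¹ * (-(3 * M / t) * ‖x‖) := h2
            _ = -(3 * M / t) := by field_simp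
    have hconvU : Convex ℝ ({x : (EuclideanSpace ℝ (Fin n)) | ∃ l : ℝ, 0 < l ∧ ∃ w ∈ W, x = l • w} ∪ {0}) := by
      rw [hUchar]
      intro x hx y hy a b ha hb hab
      simp only [mem_setOf_eq] at hx hy ⊢
      by_cases hz : a • x + b • y = 0
      · left; exact hz
      · right
        refine ⟨hz, fun p hp => ?_⟩
        have key : ∀ (c : ℝ) (u : (EuclideanSpace ℝ (Fin n))), 0 ≤ c →
            (u = 0 ∨ (u ≠ 0 ∧ ∀ q ∈ P, ⟪q.2, u⟫ < -(3 * M / t) * ‖u‖)) →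
            (⟪p.2, c • u⟫ ≤ -(3 * M / t) * ‖c • u‖ ∧
              (c • u ≠ 0 → ⟪p.2, c • u⟫ < -(3 * M / t) * ‖c • u‖)) := by
          intro c u hc hu
          by_cases hcu : c • u = 0
          · rw [hcu]
            simp
          · have hune : u ≠ 0 := by
              intro h; rw [h, smul_zero] at hcu; exact hcu rfl
            have hcpos : 0 < c := by
              rcases lt_or_eq_of_le hc with h | h
              · exact h
              · exfalso; rw [← h, zero_smul] at hcu; exact hcu rfl
            rcases hu with h | ⟨_, hu2⟩
            · exact absurd h hune
            have h1 := hu2 p hp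
            have h2 : c * ⟪p.2, u⟫ < c * (-(3 * M / t) * ‖u‖) :=
              mul_lt_mul_of_pos_left h1 hcpos
            have h3 : ⟪p.2, c • u⟫ < -(3 * M / t) * ‖c • u‖ := by
              rw [real_inner_smul_right, norm_smul, Real.norm_eq_abs, abs_of_pos hcpos]
              calc c * ⟪p.2, u⟫ < c * (-(3 * M / t) * ‖u‖) := h2
                _ = -(3 * M / t) * (c * ‖u‖) := by ring
            exact ⟨h3.le, fun _ => h3⟩
        have hax := key a x ha hx
        have hby := key b y hb hy
        have hone : a • x ≠ 0 ∨ b • y ≠ 0 := by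
          by_contra h
          push_neg at h
          rw [h.1, h.2, add_zero] at hz
          exact hz rfl
        have hnn : 0 ≤ 3 * M / t := by positivity
        have htri : ‖a • x + b • y‖ ≤ ‖a • x‖ + ‖b • y‖ := norm_add_le _ _
        have hsum : ⟪p.2, a • x + b • y⟫ < -(3 * M / t) * (‖a • x‖ + ‖b • y‖) := by
          rw [inner_add_right]
          rcases hone with h | h
          · have := hax.2 h
            have := hby.1
            nlinarith [hax.2 h, hby.1]
          · nlinarith [hax.1, hby.2 h]
        calc ⟪p.2, a • x + b • y⟫ < -(3 * M / t) * (‖a • x‖ + ‖b • y‖) := hsum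
          _ ≤ -(3 * M / t) * ‖a • x + b • y‖ := by nlinarith
    refine ⟨W, ⟨e, heW⟩, hWV, hconvU, ?_⟩
    -- Hausdorff distance
    apply Metric.hausdorffDist_le_of_infDist
    · positivity
    · intro ω hω
      obtain ⟨hω1, hωΩ⟩ := hω
      have hkey : ∀ η : ℝ, 0 < η → η ≤ 1/100 →
          Metric.infDist ω W ≤ 24 * M / (ρ * t) + 4 * η := by
        intro η hη hη2
        obtain ⟨θ, hθ⟩ : ∃ θ : ℝ, θ = 6 * M / (ρ * t) + η := ⟨_, rfl⟩
        have hρt : 0 < ρ * t := by positivity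
        have hθpos : 0 < θ := by rw [hθ]; positivity
        have hθle : θ ≤ 1/10 := by
          have h1 : 6 * M / (ρ * t) ≤ 6/100 := by
            rw [div_le_iff₀ hρt]
            nlinarith
          rw [hθ]; linarith
        obtain ⟨v, hv⟩ : ∃ v : EuclideanSpace ℝ (Fin n), v = (1 - θ) • ω + θ • e :=
          ⟨_, rfl⟩
        have hvω : ‖v - ω‖ ≤ 2 * θ := by
          have : v - ω = θ • (e - ω) := by rw [hv]; module
          rw [this, norm_smul, Real.norm_eq_abs, abs_of_pos hθpos]
          have : ‖e - ω‖ ≤ 2 := by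
            calc ‖e - ω‖ ≤ ‖e‖ + ‖ω‖ := norm_sub_le _ _
              _ = 2 := by rw [he1, hω1]; norm_num
          nlinarith
        have hv_low : 4/5 ≤ ‖v‖ := by
          have h := abs_norm_sub_norm_le v ω
          have h2 := (abs_le.mp h).1
          rw [hω1] at h2
          linarith
        have hv_up : ‖v‖ ≤ 1 := by
          calc ‖v‖ = ‖(1 - θ) • ω + θ • e‖ := by rw [hv]
            _ ≤ ‖(1 - θ) • ω‖ + ‖θ • e‖ := norm_add_le _ _
            _ = (1 - θ) * ‖ω‖ + θ * ‖e‖ := by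
                rw [norm_smul, norm_smul, Real.norm_eq_abs, Real.norm_eq_abs,
                  abs_of_nonneg (by linarith), abs_of_pos hθpos]
            _ = 1 := by rw [hω1, he1]; ring
        have hvpos : 0 < ‖v‖ := by linarith
        have hvne : v ≠ 0 := by intro h; rw [h, norm_zero] at hvpos; linarith
        obtain ⟨ω', hω'⟩ : ∃ w : EuclideanSpace ℝ (Fin n), w = ‖v‖⁻¹ • v := ⟨_, rfl⟩
        have hω'W : ω' ∈ W := by
          refine ⟨by rw [hω']; exact norm_smul_inv_norm hvne, fun p hp => ?_⟩
          have hνω : ⟪p.2, ω⟫ * t ≤ M := by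
            have h1 := hp.2.2.2 (t • ω) hωΩ
            rw [inner_sub_right, real_inner_smul_right] at h1
            have h2 := hPyM p hp
            nlinarith
          have hνe := hPe p hp
          have hinner_v : ⟪p.2, v⟫ ≤ (1 - θ) * (M / t) + θ * (2 * M - ρ) := by
            rw [hv, inner_add_right, real_inner_smul_right, real_inner_smul_right]
            have h1 : ⟪p.2, ω⟫ ≤ M / t := by
              rw [le_div_iff₀ ht0]; exact hνω
            have h2 : (1 - θ) * ⟪p.2, ω⟫ ≤ (1 - θ) * (M / t) :=
              mul_le_mul_of_nonneg_left h1 (by linarith)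
            have h3 : θ * ⟪p.2, e⟫ ≤ θ * (2 * M - ρ) :=
              mul_le_mul_of_nonneg_left hνe hθpos.le
            linarith
          have hgoal : (1 - θ) * (M / t) + θ * (2 * M - ρ) < -(3 * M / t) := by
            have hMt : M / t * t = M := div_mul_cancel₀ _ (ne_of_gt ht0)
            have hθρt : θ * (ρ * t) = 6 * M + η * (ρ * t) := by
              rw [hθ]; field_simp
            rw [show -(3 * M / t) = (-(3*M))/t from by rw [neg_div]]
            rw [show (1 - θ) * (M / t) + θ * (2 * M - ρ) < -(3*M)/t ↔
                ((1 - θ) * (M / t) + θ * (2 * M - ρ)) * t < -(3*M) from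
              lt_div_iff₀ ht0]
            have hexp : ((1 - θ) * (M / t) + θ * (2 * M - ρ)) * t =
                (1 - θ) * M + θ * (2 * M - ρ) * t := by
              field_simp
            rw [hexp]
            nlinarith [mul_nonneg hθpos.le hM0, mul_nonneg (mul_nonneg hθpos.le hM0)
              (sub_nonneg.mpr ht1.le), mul_pos hη hρt]
          have hfin : ⟪p.2, v⟫ < -(3 * M / t) := lt_of_le_of_lt hinner_v hgoal
          rw [hω', real_inner_smul_right]
          have h5 : ⟪p.2, v⟫ < -(3 * M / t) * ‖v‖ := by
            have : 0 ≤ 3 * M / t := by positivity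
            nlinarith
          have h6 : ‖v‖⁻¹ * ⟪p.2, v⟫ < ‖v‖⁻¹ * (-(3 * M / t) * ‖v‖) :=
            mul_lt_mul_of_pos_left h5 (inv_pos.mpr hvpos)
          calc ‖v‖⁻¹ * ⟪p.2, v⟫ < ‖v‖⁻¹ * (-(3 * M / t) * ‖v‖) := h6
            _ = -(3 * M / t) := by field_simp
        have hdist : dist ω ω' ≤ 4 * θ := by
          have h1 : dist ω v ≤ 2 * θ := by
            rw [dist_eq_norm, norm_sub_rev]; exact hvω
          have h2 : dist v ω' ≤ 2 * θ := by
            rw [dist_eq_norm]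
            have hveq : v - ω' = (1 - ‖v‖⁻¹) • v := by
              rw [hω']; module
            rw [hveq, norm_smul, Real.norm_eq_abs]
            have h3 : |1 - ‖v‖⁻¹| * ‖v‖ = |(1 - ‖v‖⁻¹) * ‖v‖| := by
              rw [abs_mul, abs_of_pos hvpos]
            have h4 : (1 - ‖v‖⁻¹) * ‖v‖ = ‖v‖ - 1 := by
              field_simp
            rw [h3, h4, abs_of_nonpos (by linarith)]
            have h5 := abs_norm_sub_norm_le ω v
            have h6 := (abs_le.mp h5).2
            rw [hω1, norm_sub_rev] at h6
            linarith [hvω]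
          calc dist ω ω' ≤ dist ω v + dist v ω' := dist_triangle _ _ _
            _ ≤ 4 * θ := by linarith
        have h7 : Metric.infDist ω W ≤ dist ω ω' := Metric.infDist_le_dist_of_mem hω'W
        have h8 : 4 * θ = 24 * M / (ρ * t) + 4 * η := by rw [hθ]; ring
        linarith
      have hlim : Metric.infDist ω W ≤ 24 * M / (ρ * t) := by
        apply le_of_forall_pos_le_add
        intro ε hε
        have hη : 0 < min (ε/4) (1/100) := lt_min (by linarith) (by norm_num)
        have := hkey (min (ε/4) (1/100)) hη (min_le_right _ _)
        have h9 : 4 * min (ε/4) (1/100) ≤ ε := by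
          have := min_le_left (ε/4) (1/100)
          linarith
        linarith
      have hfin : 24 * M / (ρ * t) ≤ 200 / ρ * t⁻¹ * M := by
        rw [div_le_iff₀ (by positivity)]
        have : 200 / ρ * t⁻¹ * M * (ρ * t) = 200 * M := by
          field_simp
        rw [this]
        nlinarith
      linarith
    · intro w hw
      rw [Metric.infDist_zero_of_mem (hWV hw)]
      positivity
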